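/- Mixture form of the forward transition: for every i ∈ Fin K with w_stay·m_{γ_t}(i) + D_i > 0, setting α_i = D_i / (w_stay·m_{γ_t}(i) + D_i), one has α_i ∈ [0,1] and F_i(j) = α_i·m_{γ_t}(j) + (1-α_i)·1[j=i] for all j ∈ Fin K; that is, the induced forward kernel either resamples from the marginal m_{γ_t} with probability α_i or retains the previous state i. -/

import Mathlib

/-- Mixture form of the forward transition: resample from the marginal with
probability α_i, otherwise retain the previous state. -/
theorem forward_transition_mixture
    (K : ℕ) (hK : 1 ≤ K) (q1 : Fin K → ℝ)
    (hq1nn : ∀ j, 0 ≤ q1 j) (hq1sum : ∑ j, q1 j = 1)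
    (x : Fin K)
    (γs γt : ℝ) (hγs0 : 0 ≤ γs) (hγs1 : γs ≤ 1)
    (hγt0 : 0 ≤ γt) (hγt1 : γt ≤ 1) (hts : γt ≤ γs) (hγtlt : γt < 1)
    (γst : ℝ) (hγst : γst = (1 - γs) / (1 - γt))
    (m : ℝ → Fin K → ℝ)
    (hm : ∀ (γ : ℝ) (j : Fin K), m γ j = (1 - γ) * q1 j + γ * (if j = x then (1:ℝ) else 0))
    (lam : ℝ) (hlam0 : 0 ≤ lam) (hlam1 : lam ≤ 1)
    (wstay wprior wflip : ℝ)
    (hws : wstay = (1 - lam) * γst)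
    (hwp : wprior = lam * (1 - γs))
    (hwf : wflip = (1 - lam) * (1 - γst) + lam * γs)
    (D : Fin K → ℝ)
    (hD : ∀ i, D i = wprior * q1 i + wflip * (if i = x then (1:ℝ) else 0))
    (F : Fin K → Fin K → ℝ)
    (hF : ∀ i j, F i j = (wstay * (if i = j then (1:ℝ) else 0) + D i) * m γt j / m γs i) :
    ∀ i : Fin K, 0 < wstay * m γt i + D i →
      0 ≤ D i / (wstay * m γt i + D i) ∧
      D i / (wstay * m γt i + D i) ≤ 1 ∧
      ∀ j : Fin K,
        F i j = (D i / (wstay * m γt i + D i)) * m γt j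
          + (1 - D i / (wstay * m γt i + D i)) * (if j = i then (1:ℝ) else 0) := by
  intro i hpos
  have h1t : (0:ℝ) < 1 - γt := by linarith
  have hγst0 : 0 ≤ γst := by
    rw [hγst]; exact div_nonneg (by linarith) h1t.le
  have hγst1 : γst ≤ 1 := by
    rw [hγst, div_le_one h1t]; linarith
  have hwstay : 0 ≤ wstay := by
    rw [hws]; exact mul_nonneg (by linarith) hγst0
  have hDnn : 0 ≤ D i := by
    have hq := hq1nn i
    rw [hD, hwp, hwf]
    by_cases hx : i = x <;> simp [hx] <;>
      nlinarith [mul_nonneg (mul_nonneg hlam0 (by linarith : (0:ℝ) ≤ 1 - γs)) (hq1nn x),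
        mul_nonneg (mul_nonneg hlam0 (by linarith : (0:ℝ) ≤ 1 - γs)) (hq1nn i),
        mul_nonneg (by linarith : (0:ℝ) ≤ 1 - lam) (by linarith : (0:ℝ) ≤ 1 - γst),
        mul_nonneg hlam0 hγs0]
  have hmnn : 0 ≤ m γt i := by
    rw [hm]
    have : (0:ℝ) ≤ (if i = x then (1:ℝ) else 0) := by positivity
    have hq := hq1nn i
    nlinarith
  have hS : m γs i = wstay * m γt i + D i := by
    rw [hm, hm, hD, hws, hwp, hwf, hγst]
    by_cases hx : i = x <;> simp [hx] <;> field_simp <;> ring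
  refine ⟨div_nonneg hDnn hpos.le, ?_, ?_⟩
  · rw [div_le_one hpos]
    nlinarith [mul_nonneg hwstay hmnn]
  · intro j
    rw [hF, hS]
    by_cases hji : j = i
    · subst hji
      simp only [if_pos rfl]
      field_simp
      ring
    · rw [if_neg hji, if_neg (fun h => hji h.symm)]
      field_simp
      ring
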